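/- For positive reals x, z, w define T(x) = [[0,0,1],[0,−1,−1],[x,1+x,1]] and E(z,w) = [[0,0,1/z],[0,−1,0],[w,0,0]]; note T(x) and E(z,w) are invertible (det T(x) = x, det E(z,w) = w/z). For all positive reals σ₁,…,σ₆, τ₁, τ₂, set M_α = E(σ₂,σ₁)T(τ₂)E(σ₃,σ₄)T(τ₁), M_β = T(τ₁)⁻¹E(σ₄,σ₃)T(τ₂)E(σ₅,σ₆)T(τ₁)⁻¹, M_γ = T(τ₁)E(σ₆,σ₅)T(τ₂)E(σ₁,σ₂). Then the product M_α·M_β·M_γ is a nonzero scalar multiple of the 3×3 identity matrix. -/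

import Mathlib

/-- The unnormalized Fock–Goncharov triangle matrix T(x). -/
def Tmat (x : ℝ) : Matrix (Fin 3) (Fin 3) ℝ :=
  !![0, 0, 1; 0, -1, -1; x, 1 + x, 1]

/-- The unnormalized Fock–Goncharov edge matrix E(z,w). -/
noncomputable def Emat (z w : ℝ) : Matrix (Fin 3) (Fin 3) ℝ :=
  !![0, 0, 1/z; 0, -1, 0; w, 0, 0]

lemma Tmat_inv {t : ℝ} (ht : t ≠ 0) :
    (Tmat t)⁻¹ = !![1, (1 + t)/t, 1/t; -1, -1, 0; 1, 0, 0] := by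
  apply Matrix.inv_eq_right_inv
  show Tmat t * _ = (1 : Matrix (Fin 3) (Fin 3) ℝ)
  rw [Tmat, Matrix.mul_fin_three, Matrix.one_fin_three]
  congr 1 <;> (field_simp; try simp [ht]; try ring)

lemma smul_one_fin_three (c : ℝ) :
    c • (1 : Matrix (Fin 3) (Fin 3) ℝ) = !![c, 0, 0; 0, c, 0; 0, 0, c] := by
  rw [Matrix.one_fin_three]
  ext i j
  fin_cases i <;> fin_cases j <;> simp [Matrix.vecHead, Matrix.vecTail]

set_option maxHeartbeats 1600000 in
/-- The product of the three boundary holonomy matrices M_α·M_β·M_γ is a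
nonzero scalar multiple of the identity, reflecting the relation αβγ = 1 in
π₁ of the pair of pants (the holonomies are in PSL(3,ℝ)). -/
theorem holonomy_product_scalar
    (σ1 σ2 σ3 σ4 σ5 σ6 τ1 τ2 : ℝ)
    (h1 : 0 < σ1) (h2 : 0 < σ2) (h3 : 0 < σ3) (h4 : 0 < σ4)
    (h5 : 0 < σ5) (h6 : 0 < σ6) (h7 : 0 < τ1) (h8 : 0 < τ2) :
    ∃ c : ℝ, c ≠ 0 ∧
      (Emat σ2 σ1 * Tmat τ2 * Emat σ3 σ4 * Tmat τ1) *
      ((Tmat τ1)⁻¹ * Emat σ4 σ3 * Tmat τ2 * Emat σ5 σ6 * (Tmat τ1)⁻¹) *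
      (Tmat τ1 * Emat σ6 σ5 * Tmat τ2 * Emat σ1 σ2)
        = c • (1 : Matrix (Fin 3) (Fin 3) ℝ) := by
  refine ⟨τ2, h8.ne', ?_⟩
  rw [Tmat_inv h7.ne', smul_one_fin_three]
  simp only [Tmat, Emat, Matrix.mul_fin_three]
  ext i j
  fin_cases i <;> fin_cases j <;>
    · simp [Matrix.vecHead, Matrix.vecTail]
      field_simp [h1.ne', h2.ne', h3.ne', h4.ne', h5.ne', h6.ne', h7.ne', h8.ne']
      try ring
      try simp
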